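/- Let Ω ⊆ ℝⁿ be a bounded Lipschitz domain whose boundary near a point p is the graph of a Lipschitz function φ with constant m, in coordinates where p = 0 and Ω lies above the graph. Suppose that liminf over q ∈ ∂Ω, q → p of (q−p)·ν_q/|q−p| ≥ 0 (lower C¹ condition at p). Then there exist x_p ∈ Ω and r_p > 0 with |p − x_p| < r_p such that (q − x_p)·ν_q ≥ 0 for a.e. q ∈ B_{r_p}(x_p) ∩ ∂Ω, i.e. B_{r_p}(x_p) ∩ Ω is star-shaped with center x_p. -/

import Mathlib

open MeasureTheory Set

/-- The point `(x', φ(x'))` on the graph of `φ`. -/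
noncomputable def graphPt {n : ℕ} (φ : EuclideanSpace ℝ (Fin n) → ℝ)
    (x' : EuclideanSpace ℝ (Fin n)) : EuclideanSpace ℝ (Fin (n + 1)) :=
  WithLp.toLp 2 (Fin.snoc (α := fun _ => ℝ) x'.ofLp (φ x'))

/-- The outward unit normal `(∇φ(x'), −1)/√(1+|∇φ(x')|²)` at a differentiability
point of the graph of `φ` (the domain lying above the graph). -/
noncomputable def graphNormal {n : ℕ} (φ : EuclideanSpace ℝ (Fin n) → ℝ)
    (x' : EuclideanSpace ℝ (Fin n)) : EuclideanSpace ℝ (Fin (n + 1)) :=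
  (Real.sqrt (1 + ‖gradient φ x'‖ ^ 2))⁻¹ •
    (WithLp.toLp 2 (Fin.snoc (α := fun _ => ℝ) (fun i => gradient φ x' i) (-1)) : EuclideanSpace ℝ (Fin (n + 1)))

noncomputable def esnoc {n : ℕ} (a : EuclideanSpace ℝ (Fin n)) (s : ℝ) :
    EuclideanSpace ℝ (Fin (n+1)) := WithLp.toLp 2 (Fin.snoc (α := fun _ => ℝ) a.ofLp s)

lemma inner_esnoc {n : ℕ} (a b : EuclideanSpace ℝ (Fin n)) (s t : ℝ) :
    (inner ℝ (esnoc a s) (esnoc b t) : ℝ) = (inner ℝ a b : ℝ) + s * t := by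
  simp [esnoc, PiLp.inner_apply, Fin.sum_univ_castSucc, RCLike.inner_apply, mul_comm]

lemma norm_esnoc_zero {n : ℕ} (s : ℝ) (hs : 0 ≤ s) :
    ‖esnoc (0 : EuclideanSpace ℝ (Fin n)) s‖ = s := by
  rw [EuclideanSpace.norm_eq]
  simp [esnoc, Fin.sum_univ_castSucc]
  exact Real.sqrt_sq hs

lemma graphNormal_eq {n : ℕ} (φ : EuclideanSpace ℝ (Fin n) → ℝ)
    (x' : EuclideanSpace ℝ (Fin n)) :
    graphNormal φ x' =
      (Real.sqrt (1 + ‖gradient φ x'‖ ^ 2))⁻¹ • esnoc (gradient φ x') (-1) := rfl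

lemma norm_gradient_le_of_lip {n : ℕ} {m : NNReal} {φ : EuclideanSpace ℝ (Fin n) → ℝ}
    (hφlip : LipschitzWith m φ) (x' : EuclideanSpace ℝ (Fin n)) :
    ‖gradient φ x'‖ ≤ m := by
  rw [gradient, LinearIsometryEquiv.norm_map]
  exact norm_fderiv_le_of_lipschitz ℝ hφlip

/-- Theorem 3.8: a Lipschitz-graph domain satisfying the lower `C¹`
condition at a boundary point `p = 0` is star-shaped in some ball around a
nearby interior point `x_p`. -/
theorem stmt_15 {n : ℕ} (Ω : Set (EuclideanSpace ℝ (Fin (n + 1))))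
    (hΩopen : IsOpen Ω) (hΩbdd : Bornology.IsBounded Ω)
    (m : NNReal) (φ : EuclideanSpace ℝ (Fin n) → ℝ)
    (hφlip : LipschitzWith m φ) (hφ0 : φ 0 = 0)
    (hp : (0 : EuclideanSpace ℝ (Fin (n + 1))) ∈ frontier Ω)
    (ϱ : ℝ) (hϱ : 0 < ϱ)
    (hgraph : ∀ x : EuclideanSpace ℝ (Fin (n + 1)), ‖x‖ < ϱ →
      ((x ∈ Ω ↔ φ (WithLp.toLp 2 (Fin.init x)) < x (Fin.last n)) ∧
       (x ∈ frontier Ω ↔ x (Fin.last n) = φ (WithLp.toLp 2 (Fin.init x)))))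
    (hlowerC1 : ∀ ε : ℝ, 0 < ε → ∃ s : ℝ, 0 < s ∧
      ∀ x' : EuclideanSpace ℝ (Fin n), DifferentiableAt ℝ φ x' →
        ‖graphPt φ x'‖ < s →
        -(ε * ‖graphPt φ x'‖) ≤ (inner ℝ (graphPt φ x') (graphNormal φ x') : ℝ)) :
    ∃ xp ∈ Ω, ∃ rp : ℝ, 0 < rp ∧ ‖(0 : EuclideanSpace ℝ (Fin (n + 1))) - xp‖ < rp ∧
      ∀ x' : EuclideanSpace ℝ (Fin n), DifferentiableAt ℝ φ x' →
        graphPt φ x' ∈ Metric.ball xp rp →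
        0 ≤ (inner ℝ (graphPt φ x' - xp) (graphNormal φ x') : ℝ) := by
  set S : ℝ := Real.sqrt (1 + (m : ℝ) ^ 2) with hS
  have hS1 : 1 ≤ S := by
    rw [hS]
    nlinarith [Real.sq_sqrt (by positivity : (0:ℝ) ≤ 1 + (m:ℝ)^2),
      Real.sqrt_nonneg (1 + (m:ℝ)^2)]
  have hSpos : 0 < S := lt_of_lt_of_le one_pos hS1
  obtain ⟨s, hspos, hs⟩ := hlowerC1 ((3 * S)⁻¹) (by positivity)
  set δ : ℝ := min (ϱ / 2) (s / 3) with hδdef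
  have hδpos : 0 < δ := lt_min (by linarith) (by linarith)
  set xp : EuclideanSpace ℝ (Fin (n + 1)) := esnoc 0 δ with hxp
  have hxpnorm : ‖xp‖ = δ := norm_esnoc_zero δ hδpos.le
  have hxpΩ : xp ∈ Ω := by
    have h := (hgraph xp (by rw [hxpnorm]; exact lt_of_le_of_lt (min_le_left _ _) (by linarith))).1
    rw [h]
    have h1 : Fin.init xp = 0 := by
      funext i; simp [hxp, esnoc, Fin.init]
    have h2 : xp (Fin.last n) = δ := by
      simp [hxp, esnoc]
    rw [h1, h2, WithLp.toLp_zero, hφ0]; exact hδpos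
  refine ⟨xp, hxpΩ, 2 * δ, by linarith, ?_, ?_⟩
  · rw [zero_sub, norm_neg, hxpnorm]; linarith
  · intro x' hdiff hball
    set g : EuclideanSpace ℝ (Fin n) := gradient φ x' with hg
    set c : ℝ := (Real.sqrt (1 + ‖g‖ ^ 2))⁻¹ with hc
    have hgm : ‖g‖ ≤ (m : ℝ) := norm_gradient_le_of_lip hφlip x'
    have hsqrtle : Real.sqrt (1 + ‖g‖ ^ 2) ≤ S := by
      rw [hS]
      apply Real.sqrt_le_sqrt
      nlinarith [norm_nonneg g]
    have hsqrtpos : 0 < Real.sqrt (1 + ‖g‖ ^ 2) := by positivity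
    have hcpos : 0 < c := by rw [hc]; positivity
    have hcS : S⁻¹ ≤ c := by
      rw [hc]
      exact inv_anti₀ hsqrtpos hsqrtle
    -- bound on ‖q‖
    set q : EuclideanSpace ℝ (Fin (n + 1)) := graphPt φ x' with hq
    have hqxp : ‖q - xp‖ < 2 * δ := by
      rw [Metric.mem_ball, dist_eq_norm] at hball; exact hball
    have hqnorm : ‖q‖ < 3 * δ := by
      have := norm_sub_norm_le q xp
      rw [hxpnorm] at this; linarith
    have hqs : ‖q‖ < s := lt_of_lt_of_le hqnorm
      (by have := min_le_right (ϱ / 2) (s / 3); simp only [hδdef]; linarith)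
    have hlow : -((3 * S)⁻¹ * ‖q‖) ≤ (inner ℝ q (graphNormal φ x') : ℝ) := hs x' hdiff hqs
    -- inner product with xp
    have hinnerxp : (inner ℝ xp (graphNormal φ x') : ℝ) = -(c * δ) := by
      rw [graphNormal_eq, real_inner_smul_right, hxp, inner_esnoc]
      simp [← hg, ← hc]
    have hsplit : (inner ℝ (q - xp) (graphNormal φ x') : ℝ)
        = (inner ℝ q (graphNormal φ x') : ℝ) - (inner ℝ xp (graphNormal φ x') : ℝ) :=
      inner_sub_left _ _ _
    rw [hsplit, hinnerxp]
    have h1 : (3 * S)⁻¹ * ‖q‖ ≤ (3 * S)⁻¹ * (3 * δ) := by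
      apply mul_le_mul_of_nonneg_left hqnorm.le (by positivity)
    have h2 : (3 * S)⁻¹ * (3 * δ) = S⁻¹ * δ := by
      field_simp
    have h3 : S⁻¹ * δ ≤ c * δ := mul_le_mul_of_nonneg_right hcS hδpos.le
    linarith
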